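/- In the idealized BMA process, if dist_ideal(t) = dist_ideal(t+1) = ... = dist_ideal(t+L) = k for some k with 1 ≤ k ≤ L/2, then the source string x̃ contains a k-desert of length L, i.e., x̃_{t+ℓ} = x̃_{t+k+ℓ} for all ℓ ∈ [0, L−1]. -/

import Mathlib

/-- Surviving source positions under the deletion pattern `del`. -/
def traceIdx (R : ℕ) (del : ℕ → Bool) : List ℕ :=
  (List.range R).filter fun i => !(del i)

/-- Source position of the q-th trace symbol (padding maps to R, R+1, ...). -/
def srcF (R : ℕ) (del : ℕ → Bool) (q : ℕ) : ℕ :=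
  if q < (traceIdx R del).length then (traceIdx R del).getD q 0
  else R + (q - (traceIdx R del).length)

/-- The q-th trace symbol (`none` for padding). -/
def traceBit (R : ℕ) (xt del : ℕ → Bool) (q : ℕ) : Option Bool :=
  if q < (traceIdx R del).length then some (xt ((traceIdx R del).getD q 0)) else none

/-- The pointer of the idealized BMA process at step t. -/
def curPtr (R : ℕ) (xt del : ℕ → Bool) : ℕ → ℕ
  | 0 => 0
  | t + 1 =>
      if traceBit R xt del (curPtr R xt del t) = some (xt t)
      then curPtr R xt del t + 1 else curPtr R xt del t

/-- in the idealized BMA process, if dist_ideal(t+j) = k for all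
j = 0, 1, ..., L (with 1 ≤ k ≤ L/2), then the source string contains a
k-desert of length L starting at position t: x̃_{t+ℓ} = x̃_{t+k+ℓ} for all
ℓ ∈ [0, L-1]. -/
theorem stmt14 (R L k t : ℕ) (xt del : ℕ → Bool)
    (hk1 : 1 ≤ k) (hk2 : 2 * k ≤ L)
    (hconst : ∀ j ≤ L, srcF R del (curPtr R xt del (t + j)) = (t + j) + k) :
    ∀ l < L, xt (t + l) = xt (t + k + l) := by
  intro l hl
  have h1 := hconst l (le_of_lt hl)
  have h2 := hconst (l + 1) (by omega)
  by_cases hc : traceBit R xt del (curPtr R xt del (t + l)) = some (xt (t + l))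
  · set p := curPtr R xt del (t + l) with hp
    unfold traceBit at hc
    split at hc
    · have hs : srcF R del p = (traceIdx R del).getD p 0 := by
        unfold srcF; rw [if_pos ‹p < (traceIdx R del).length›]
      rw [h1] at hs
      have hb : xt ((traceIdx R del).getD p 0) = xt (t + l) := by
        exact Option.some.inj hc
      rw [← hs] at hb
      rw [show t + k + l = t + l + k by omega]
      exact hb.symm
    · exact absurd hc (by simp)
  · have hstep : curPtr R xt del (t + (l + 1)) = curPtr R xt del (t + l) := by
      show (if traceBit R xt del (curPtr R xt del (t + l)) = some (xt (t + l))
        then curPtr R xt del (t + l) + 1 else curPtr R xt del (t + l)) = _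
      rw [if_neg hc]
    rw [hstep, h1] at h2
    omega
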